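/- Let {u_n} be a sequence of unit vectors in ℝ² and let T_n = S_{u_n} ∘ ⋯ ∘ S_{u_1} be the associated Steiner process acting on Lebesgue measurable subsets of ℝ² of finite measure. Suppose that for every set R that is a finite union of axis-parallel rectangles, λ(T_n R Δ R*) → 0 as n → ∞, where R* is the ball centered at the origin with λ(R*) = λ(R). Then for every Lebesgue measurable set M ⊆ ℝ² of finite Lebesgue measure, λ(T_n M Δ M*) → 0 as n → ∞. -/

import Mathlib

open MeasureTheory Filter Topology
open scoped ENNReal symmDiff RealInnerProductSpace

/-- The plane `ℝ²`. -/
abbrev Plane := EuclideanSpace ℝ (Fin 2)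

/-- The Steiner symmetral (with open segments) of a set `M ⊆ ℝ²` in the direction of
the unit vector `u`. -/
noncomputable def steinerSymmetral (u : Plane) (M : Set Plane) : Set Plane :=
  {y | ∃ (x : Plane) (t : ℝ), inner ℝ x u = (0 : ℝ) ∧ y = x + t • u ∧
    ENNReal.ofReal (2 * |t|) < volume {s : ℝ | x + s • u ∈ M}}

/-- The closed axis-parallel rectangle `[a₁, b₁] × [a₂, b₂]` in the plane. -/
def axisRect (q : ℝ × ℝ × ℝ × ℝ) : Set Plane :=
  {x | x 0 ∈ Set.Icc q.1 q.2.1 ∧ x 1 ∈ Set.Icc q.2.2.1 q.2.2.2}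

-- fiber function on ℝ×ℝ
noncomputable def fib (N : Set (ℝ × ℝ)) (a : ℝ) : ℝ≥0∞ := volume {s : ℝ | (a, s) ∈ N}

def symm2 (N : Set (ℝ × ℝ)) : Set (ℝ × ℝ) := {p | ENNReal.ofReal (2 * |p.2|) < fib N p.1}

lemma fib_measurable {N : Set (ℝ × ℝ)} (hN : MeasurableSet N) : Measurable (fib N) := by
  have := measurable_measure_prodMk_left (ν := (volume : Measure ℝ)) hN
  exact this

lemma symm2_measurableSet {N : Set (ℝ × ℝ)} (hN : MeasurableSet N) :
    MeasurableSet (symm2 N) := by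
  have h1 : Measurable fun p : ℝ × ℝ => ENNReal.ofReal (2 * |p.2|) := by
    measurability
  exact measurableSet_lt h1 ((fib_measurable hN).comp measurable_fst)

lemma vol_centered (c : ℝ≥0∞) : volume {s : ℝ | ENNReal.ofReal (2 * |s|) < c} = c := by
  rcases eq_or_ne c ⊤ with rfl | hc
  · have : {s : ℝ | ENNReal.ofReal (2 * |s|) < ⊤} = Set.univ := by
      ext s; simp only [Set.mem_setOf_eq, Set.mem_univ, ENNReal.ofReal_lt_top]
    rw [this]; simp
  · have hset : {s : ℝ | ENNReal.ofReal (2 * |s|) < c} = Set.Ioo (-(c.toReal / 2)) (c.toReal / 2) := by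
      ext s
      simp only [Set.mem_setOf_eq, Set.mem_Ioo]
      rw [ENNReal.ofReal_lt_iff_lt_toReal (by positivity) hc]
      constructor
      · intro h
        constructor <;> nlinarith [abs_nonneg s, le_abs_self s, neg_abs_le s]
      · intro ⟨h1, h2⟩
        have : |s| < c.toReal / 2 := abs_lt.2 ⟨h1, h2⟩
        linarith
    rw [hset, Real.volume_Ioo]
    rw [show c.toReal / 2 - -(c.toReal / 2) = c.toReal by ring, ENNReal.ofReal_toReal hc]

lemma centered_meas (c : ℝ≥0∞) : MeasurableSet {s : ℝ | ENNReal.ofReal (2 * |s|) < c} := by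
  have h1 : Measurable fun s : ℝ => ENNReal.ofReal (2 * |s|) := by measurability
  exact measurableSet_lt h1 measurable_const

lemma centered_mono {c d : ℝ≥0∞} (h : c ≤ d) :
    {s : ℝ | ENNReal.ofReal (2 * |s|) < c} ⊆ {s : ℝ | ENNReal.ofReal (2 * |s|) < d} :=
  fun s hs => lt_of_lt_of_le hs h

lemma centered_symmDiff_le_aux {c d e : ℝ≥0∞} (hcd : c ≤ d) (h2 : d ≤ c + e) :
    volume (symmDiff {s : ℝ | ENNReal.ofReal (2 * |s|) < c}
      {s : ℝ | ENNReal.ofReal (2 * |s|) < d}) ≤ e := by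
  set Ic := {s : ℝ | ENNReal.ofReal (2 * |s|) < c}
  set Id := {s : ℝ | ENNReal.ofReal (2 * |s|) < d}
  have hsub : Ic ⊆ Id := centered_mono hcd
  have hsd : symmDiff Ic Id = Id \ Ic := by
    rw [Set.symmDiff_def, Set.diff_eq_empty.2 hsub, Set.empty_union]
  rw [hsd]
  rcases eq_or_ne c ⊤ with rfl | hc
  · have : d = ⊤ := top_le_iff.mp hcd
    subst this
    simp [Ic, Id]
  · rw [measure_diff hsub (centered_meas c).nullMeasurableSet (by rw [vol_centered]; exact hc),
      vol_centered, vol_centered]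
    exact tsub_le_iff_left.2 h2

lemma centered_symmDiff_le {c d e : ℝ≥0∞} (h1 : c ≤ d + e) (h2 : d ≤ c + e) :
    volume (symmDiff {s : ℝ | ENNReal.ofReal (2 * |s|) < c}
      {s : ℝ | ENNReal.ofReal (2 * |s|) < d}) ≤ e := by
  rcases le_total c d with h | h
  · exact centered_symmDiff_le_aux h h2
  · rw [symmDiff_comm]
    exact centered_symmDiff_le_aux h h1

lemma fib_le_add {A B : Set (ℝ × ℝ)} (a : ℝ) :
    fib A a ≤ fib B a + fib (symmDiff A B) a := by
  have hsub : {s : ℝ | (a, s) ∈ A} ⊆ {s : ℝ | (a, s) ∈ B} ∪ {s : ℝ | (a, s) ∈ symmDiff A B} := by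
    intro s hs
    by_cases hb : (a, s) ∈ B
    · exact Or.inl hb
    · exact Or.inr (Or.inl ⟨hs, hb⟩)
  calc fib A a ≤ volume ({s : ℝ | (a, s) ∈ B} ∪ {s : ℝ | (a, s) ∈ symmDiff A B}) :=
        measure_mono hsub
    _ ≤ fib B a + fib (symmDiff A B) a := measure_union_le _ _

lemma symm2_contract {A B : Set (ℝ × ℝ)} (hA : MeasurableSet A) (hB : MeasurableSet B) :
    volume (symmDiff (symm2 A) (symm2 B)) ≤ volume (symmDiff A B) := by
  have hAB : MeasurableSet (symmDiff A B) := hA.symmDiff hB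
  have hS : MeasurableSet (symmDiff (symm2 A) (symm2 B)) :=
    (symm2_measurableSet hA).symmDiff (symm2_measurableSet hB)
  rw [Measure.volume_eq_prod, Measure.prod_apply hS, Measure.prod_apply hAB]
  refine lintegral_mono fun a => ?_
  have hfibS : Prod.mk a ⁻¹' (symmDiff (symm2 A) (symm2 B))
      = symmDiff {s : ℝ | ENNReal.ofReal (2 * |s|) < fib A a}
        {s : ℝ | ENNReal.ofReal (2 * |s|) < fib B a} := by
    rw [Set.preimage_symmDiff]
    rfl
  have hfibAB : (volume : Measure ℝ) (Prod.mk a ⁻¹' symmDiff A B) = fib (symmDiff A B) a := rfl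
  rw [hfibS, hfibAB]
  exact centered_symmDiff_le (fib_le_add a) (by simpa [symmDiff_comm A B] using fib_le_add (A := B) (B := A) a)

noncomputable def perp (u : Plane) : Plane := (EuclideanSpace.equiv (Fin 2) ℝ).symm ![-(u 1), u 0]

lemma perp_apply0 (u : Plane) : perp u 0 = -(u 1) := rfl
lemma perp_apply1 (u : Plane) : perp u 1 = u 0 := rfl

lemma norm_sq_eq (u : Plane) : ⟪u, u⟫ = u 0 * u 0 + u 1 * u 1 := by
  simp only [PiLp.inner_apply, Fin.sum_univ_two, RCLike.inner_apply, conj_trivial]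

lemma hon (u : Plane) (hu : ‖u‖ = 1) : Orthonormal ℝ (![perp u, u] : Fin 2 → Plane) := by
  have h2 : ⟪u, u⟫ = 1 := by
    rw [real_inner_self_eq_norm_sq, hu]; norm_num
  have h2' : u 0 * u 0 + u 1 * u 1 = 1 := by rw [← norm_sq_eq]; exact h2
  rw [orthonormal_iff_ite]
  intro i j
  fin_cases i <;> fin_cases j <;>
    simp [PiLp.inner_apply, Fin.sum_univ_two, perp_apply0, perp_apply1, -inner_self_eq_norm_sq_to_K] <;> ring_nf <;>
    nlinarith [h2']

noncomputable def onb (u : Plane) (hu : ‖u‖ = 1) : OrthonormalBasis (Fin 2) ℝ Plane :=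
  (basisOfOrthonormalOfCardEqFinrank (hon u hu)
    (by simp [finrank_euclideanSpace_fin])).toOrthonormalBasis
    (by rw [coe_basisOfOrthonormalOfCardEqFinrank]; exact hon u hu)

lemma onb_apply0 (u : Plane) (hu : ‖u‖ = 1) : onb u hu 0 = perp u := by
  simp [onb, Module.Basis.coe_toOrthonormalBasis, coe_basisOfOrthonormalOfCardEqFinrank]

lemma onb_apply1 (u : Plane) (hu : ‖u‖ = 1) : onb u hu 1 = u := by
  simp [onb, Module.Basis.coe_toOrthonormalBasis, coe_basisOfOrthonormalOfCardEqFinrank]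

noncomputable def Phi (u : Plane) (hu : ‖u‖ = 1) : Plane ≃ᵐ (ℝ × ℝ) :=
  (onb u hu).measurableEquiv.trans
    ((MeasurableEquiv.toLp 2 (Fin 2 → ℝ)).symm.trans (MeasurableEquiv.finTwoArrow))

lemma Phi_measurePreserving (u : Plane) (hu : ‖u‖ = 1) :
    MeasurePreserving (Phi u hu) volume volume :=
  ((volume_preserving_finTwoArrow ℝ).comp
    (EuclideanSpace.volume_preserving_symm_measurableEquiv_toLp (Fin 2))).comp
    ((onb u hu).measurePreserving_measurableEquiv)

lemma Phi_apply (u : Plane) (hu : ‖u‖ = 1) (y : Plane) :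
    Phi u hu y = (⟪perp u, y⟫, ⟪u, y⟫) := by
  have h0 := (onb u hu).repr_apply_apply y 0
  have h1 := (onb u hu).repr_apply_apply y 1
  rw [onb_apply0] at h0; rw [onb_apply1] at h1
  simp only [Phi, MeasurableEquiv.trans_apply, MeasurableEquiv.finTwoArrow_apply,
    OrthonormalBasis.measurableEquiv,
    Homeomorph.toMeasurableEquiv_coe, LinearIsometryEquiv.coe_toHomeomorph]
  rw [show (MeasurableEquiv.toLp 2 (Fin 2 → ℝ)).symm ((onb u hu).repr y) 0 = (onb u hu).repr y 0 from rfl,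
    show (MeasurableEquiv.toLp 2 (Fin 2 → ℝ)).symm ((onb u hu).repr y) 1 = (onb u hu).repr y 1 from rfl,
    h0, h1]

lemma Phi_symm_apply (u : Plane) (hu : ‖u‖ = 1) (a t : ℝ) :
    (Phi u hu).symm (a, t) = a • perp u + t • u := by
  apply (Phi u hu).injective
  rw [MeasurableEquiv.apply_symm_apply, Phi_apply]
  have h := orthonormal_iff_ite.mp (hon u hu)
  have hvv : perp u 0 * perp u 0 + perp u 1 * perp u 1 = 1 := by
    simpa [PiLp.inner_apply, Fin.sum_univ_two, -inner_self_eq_norm_sq_to_K] using h 0 0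
  have hvu : perp u 0 * u 0 + perp u 1 * u 1 = 0 := by
    simpa [PiLp.inner_apply, Fin.sum_univ_two, mul_comm] using h 0 1
  have huu : u 0 * u 0 + u 1 * u 1 = 1 := by
    simpa [PiLp.inner_apply, Fin.sum_univ_two, -inner_self_eq_norm_sq_to_K] using h 1 1
  simp only [PiLp.inner_apply, RCLike.inner_apply, conj_trivial, Fin.sum_univ_two,
    PiLp.add_apply, PiLp.smul_apply, smul_eq_mul, Prod.mk.injEq]
  constructor
  · linear_combination (-a) * hvv + (-t) * hvu
  · linear_combination (-a) * hvu + (-t) * huu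

lemma inner_perp_u (u : Plane) (hu : ‖u‖ = 1) : ⟪perp u, u⟫ = 0 := by
  simpa using orthonormal_iff_ite.mp (hon u hu) 0 1

lemma inner_u_u (u : Plane) (hu : ‖u‖ = 1) : ⟪u, u⟫ = 1 := by
  simpa using orthonormal_iff_ite.mp (hon u hu) 1 1

lemma decomp (u : Plane) (hu : ‖u‖ = 1) (y : Plane) :
    y = ⟪perp u, y⟫ • perp u + ⟪u, y⟫ • u := by
  have := (onb u hu).sum_repr' y
  rw [Fin.sum_univ_two, onb_apply0, onb_apply1] at this
  exact this.symm

lemma fib_image (u : Plane) (hu : ‖u‖ = 1) (M : Set Plane) (a : ℝ) :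
    fib (Phi u hu '' M) a = volume {s : ℝ | a • perp u + s • u ∈ M} := by
  have : {s : ℝ | (a, s) ∈ Phi u hu '' M} = {s : ℝ | a • perp u + s • u ∈ M} := by
    ext s
    have hmem : (a, s) ∈ Phi u hu '' M ↔ (Phi u hu).symm (a, s) ∈ M := by
      constructor
      · rintro ⟨m, hm, he⟩
        rw [← he]
        simpa using hm
      · intro h
        exact ⟨_, h, (Phi u hu).apply_symm_apply _⟩
    simp only [Set.mem_setOf_eq, hmem, Phi_symm_apply]
  rw [fib, this]

lemma steiner_eq_preimage (u : Plane) (hu : ‖u‖ = 1) (M : Set Plane) :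
    steinerSymmetral u M = Phi u hu ⁻¹' (symm2 (Phi u hu '' M)) := by
  ext y
  simp only [steinerSymmetral, Set.mem_setOf_eq, Set.mem_preimage, symm2]
  rw [Phi_apply u hu y]
  simp only [Set.mem_setOf_eq, fib_image u hu M]
  constructor
  · rintro ⟨x, t, hx, rfl, hlt⟩
    have hux : ⟪u, x⟫ = 0 := by rwa [real_inner_comm]
    have h1 : ⟪perp u, x + t • u⟫ = ⟪perp u, x⟫ := by
      rw [inner_add_right, real_inner_smul_right, inner_perp_u u hu]; ring
    have h2 : ⟪u, x + t • u⟫ = t := by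
      rw [inner_add_right, real_inner_smul_right, inner_u_u u hu, hux]; ring
    have hx' : ⟪perp u, x⟫ • perp u = x := by
      have := decomp u hu x
      rw [hux] at this
      simpa using this.symm
    rw [h1, h2, hx']
    exact hlt
  · intro h
    refine ⟨⟪perp u, y⟫ • perp u, ⟪u, y⟫, ?_, ?_, ?_⟩
    · rw [real_inner_smul_left, inner_perp_u u hu]; ring
    · exact decomp u hu y
    · exact h

lemma Phi_image_measurableSet (u : Plane) (hu : ‖u‖ = 1) {S : Set Plane}
    (hS : MeasurableSet S) : MeasurableSet (Phi u hu '' S) :=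
  (Phi u hu).measurableEmbedding.measurableSet_image' hS

lemma Phi_image_volume (u : Plane) (hu : ‖u‖ = 1) {S : Set Plane} (hS : MeasurableSet S) :
    volume (Phi u hu '' S) = volume S := by
  rw [show Phi u hu '' S = (Phi u hu).symm ⁻¹' S from Equiv.image_eq_preimage_symm _ _]
  exact (Phi_measurePreserving u hu).symm _ |>.measure_preimage hS.nullMeasurableSet

lemma steiner_measurableSet (u : Plane) (hu : ‖u‖ = 1) {M : Set Plane}
    (hM : MeasurableSet M) : MeasurableSet (steinerSymmetral u M) := by
  rw [steiner_eq_preimage u hu]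
  exact (Phi u hu).measurable (symm2_measurableSet (Phi_image_measurableSet u hu hM))

lemma steiner_contract (u : Plane) (hu : ‖u‖ = 1) {A B : Set Plane}
    (hA : MeasurableSet A) (hB : MeasurableSet B) :
    volume (symmDiff (steinerSymmetral u A) (steinerSymmetral u B)) ≤ volume (symmDiff A B) := by
  rw [steiner_eq_preimage u hu A, steiner_eq_preimage u hu B, ← Set.preimage_symmDiff,
    (Phi_measurePreserving u hu).measure_preimage
      (((symm2_measurableSet (Phi_image_measurableSet u hu hA)).symmDiff
        (symm2_measurableSet (Phi_image_measurableSet u hu hB))).nullMeasurableSet)]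
  calc volume (symmDiff (symm2 (Phi u hu '' A)) (symm2 (Phi u hu '' B)))
      ≤ volume (symmDiff (Phi u hu '' A) (Phi u hu '' B)) :=
        symm2_contract (Phi_image_measurableSet u hu hA) (Phi_image_measurableSet u hu hB)
    _ = volume (Phi u hu '' symmDiff A B) := by
        rw [Set.image_symmDiff (Phi u hu).injective]
    _ = volume (symmDiff A B) := Phi_image_volume u hu (hA.symmDiff hB)

/-- The Steiner process associated with a sequence of directions `u`:
`T 0 = id` and `T (n+1) = S_{u n} ∘ T n`, so that `T n = S_{u_n} ∘ ⋯ ∘ S_{u_1}`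
with 1-based indexing of the directions. -/
noncomputable def steinerProcess (u : ℕ → Plane) : ℕ → Set Plane → Set Plane
  | 0, M => M
  | n + 1, M => steinerSymmetral (u n) (steinerProcess u n M)

lemma process_measurableSet (u : ℕ → Plane) (hu : ∀ n, ‖u n‖ = 1) {M : Set Plane}
    (hM : MeasurableSet M) (n : ℕ) : MeasurableSet (steinerProcess u n M) := by
  induction n with
  | zero => exact hM
  | succ n ih => exact steiner_measurableSet (u n) (hu n) ih

lemma process_contract (u : ℕ → Plane) (hu : ∀ n, ‖u n‖ = 1) {A B : Set Plane}
    (hA : MeasurableSet A) (hB : MeasurableSet B) (n : ℕ) :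
    volume (symmDiff (steinerProcess u n A) (steinerProcess u n B)) ≤ volume (symmDiff A B) := by
  induction n with
  | zero => exact le_rfl
  | succ n ih =>
      exact (steiner_contract (u n) (hu n) (process_measurableSet u hu hA n)
        (process_measurableSet u hu hB n)).trans ih

lemma measure_le_add_symmDiff {α : Type*} [MeasurableSpace α] (μ : Measure α) (A B : Set α) :
    μ A ≤ μ B + μ (symmDiff A B) := by
  have hsub : A ⊆ B ∪ symmDiff A B := by
    intro x hx
    by_cases hb : x ∈ B
    · exact Or.inl hb
    · exact Or.inr (Or.inl ⟨hx, hb⟩)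
  exact (measure_mono hsub).trans (measure_union_le _ _)

lemma exists_radius (v : ℝ≥0∞) (hv : v ≠ ⊤) :
    ∃ ρ : ℝ, 0 ≤ ρ ∧ volume (Metric.ball (0 : Plane) ρ) = v := by
  set B1 := volume (Metric.ball (0 : Plane) 1) with hB1
  have hB1pos : 0 < B1 := Metric.measure_ball_pos _ _ one_pos
  have hB1fin : B1 ≠ ⊤ := measure_ball_lt_top.ne
  set ρ := Real.sqrt (v.toReal / B1.toReal) with hρ
  have hρ0 : 0 ≤ ρ := Real.sqrt_nonneg _
  refine ⟨ρ, hρ0, ?_⟩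
  rw [Measure.addHaar_ball volume (0 : Plane) hρ0]
  have hfr : Module.finrank ℝ Plane = 2 := finrank_euclideanSpace_fin
  rw [hfr]
  have hsq : ρ ^ 2 = v.toReal / B1.toReal := by
    rw [hρ, Real.sq_sqrt]
    positivity
  rw [hsq, ENNReal.ofReal_div_of_pos (ENNReal.toReal_pos hB1pos.ne' hB1fin),
    ENNReal.ofReal_toReal hv, ENNReal.ofReal_toReal hB1fin]
  exact ENNReal.div_mul_cancel hB1pos.ne' hB1fin

lemma ball_symmDiff_le_aux {ρ r : ℝ} (h : ρ ≤ r) {e : ℝ≥0∞}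
    (h2 : volume (Metric.ball (0 : Plane) r) ≤ volume (Metric.ball (0 : Plane) ρ) + e) :
    volume (symmDiff (Metric.ball (0 : Plane) ρ) (Metric.ball (0 : Plane) r)) ≤ e := by
  have hsub : Metric.ball (0 : Plane) ρ ⊆ Metric.ball (0 : Plane) r := Metric.ball_subset_ball h
  have hsd : symmDiff (Metric.ball (0 : Plane) ρ) (Metric.ball (0 : Plane) r)
      = Metric.ball (0 : Plane) r \ Metric.ball (0 : Plane) ρ := by
    rw [Set.symmDiff_def, Set.diff_eq_empty.2 hsub, Set.empty_union]
  rw [hsd, measure_diff hsub measurableSet_ball.nullMeasurableSet measure_ball_lt_top.ne]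
  exact tsub_le_iff_left.2 h2

lemma ball_symmDiff_le {ρ r : ℝ} {e : ℝ≥0∞}
    (h1 : volume (Metric.ball (0 : Plane) ρ) ≤ volume (Metric.ball (0 : Plane) r) + e)
    (h2 : volume (Metric.ball (0 : Plane) r) ≤ volume (Metric.ball (0 : Plane) ρ) + e) :
    volume (symmDiff (Metric.ball (0 : Plane) ρ) (Metric.ball (0 : Plane) r)) ≤ e := by
  rcases le_total ρ r with h | h
  · exact ball_symmDiff_le_aux h h2
  · rw [symmDiff_comm]
    exact ball_symmDiff_le_aux h h1

lemma axisRect_measurableSet (q : ℝ × ℝ × ℝ × ℝ) : MeasurableSet (axisRect q) := by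
  have h0 : Measurable fun x : Plane => x 0 := (EuclideanSpace.proj (0 : Fin 2)).continuous.measurable
  have h1 : Measurable fun x : Plane => x 1 := (EuclideanSpace.proj (1 : Fin 2)).continuous.measurable
  exact (h0 measurableSet_Icc).inter (h1 measurableSet_Icc)

def qcast (q : ℚ × ℚ × ℚ × ℚ) : ℝ × ℝ × ℝ × ℝ := ((q.1 : ℝ), (q.2.1 : ℝ), (q.2.2.1 : ℝ), (q.2.2.2 : ℝ))

lemma rect_mem_subset_ball (y : Plane) {ε : ℝ} (hε : 0 < ε) :
    ∃ q : ℚ × ℚ × ℚ × ℚ, y ∈ axisRect (qcast q) ∧ axisRect (qcast q) ⊆ Metric.ball y ε := by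
  obtain ⟨a, ha1, ha2⟩ := exists_rat_btwn (show y 0 - ε / 2 < y 0 by linarith)
  obtain ⟨b, hb1, hb2⟩ := exists_rat_btwn (show y 0 < y 0 + ε / 2 by linarith)
  obtain ⟨c, hc1, hc2⟩ := exists_rat_btwn (show y 1 - ε / 2 < y 1 by linarith)
  obtain ⟨d, hd1, hd2⟩ := exists_rat_btwn (show y 1 < y 1 + ε / 2 by linarith)
  refine ⟨(a, b, c, d), ⟨⟨ha2.le, hb1.le⟩, ⟨hc2.le, hd1.le⟩⟩, ?_⟩
  intro x hx
  obtain ⟨⟨hx01, hx02⟩, hx11, hx12⟩ := hx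
  simp only [qcast] at hx01 hx02 hx11 hx12
  rw [Metric.mem_ball, EuclideanSpace.dist_eq]
  rw [Fin.sum_univ_two]
  apply Real.sqrt_lt' hε |>.mpr
  have e0 : |x 0 - y 0| < ε / 2 := by
    rw [abs_lt]; constructor <;> nlinarith
  have e1 : |x 1 - y 1| < ε / 2 := by
    rw [abs_lt]; constructor <;> nlinarith
  have d0 : dist (x 0) (y 0) = |x 0 - y 0| := rfl
  have d1 : dist (x 1) (y 1) = |x 1 - y 1| := rfl
  rw [d0, d1]
  nlinarith [abs_nonneg (x 0 - y 0), abs_nonneg (x 1 - y 1), sq_abs (x 0 - y 0), sq_abs (x 1 - y 1)]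

def rectStage (f : ℕ → ℚ × ℚ × ℚ × ℚ) (n : ℕ) : Set Plane :=
  ⋃ k ∈ Finset.range (n + 1), axisRect (qcast (f k))

lemma rectStage_eq (f : ℕ → ℚ × ℚ × ℚ × ℚ) (n : ℕ) :
    rectStage f n = ⋃ q ∈ (Finset.range (n + 1)).image (fun k => qcast (f k)), axisRect q :=
  (Finset.set_biUnion_finset_image).symm

lemma rectStage_measurableSet (f : ℕ → ℚ × ℚ × ℚ × ℚ) (n : ℕ) :
    MeasurableSet (rectStage f n) :=
  Finset.measurableSet_biUnion _ fun q _ => axisRect_measurableSet _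

lemma rectStage_mono (f : ℕ → ℚ × ℚ × ℚ × ℚ) : Monotone (rectStage f) := by
  intro m n hmn
  exact Set.biUnion_subset_biUnion_left fun k hk =>
    Finset.mem_range.mpr (Nat.lt_of_lt_of_le (Finset.mem_range.mp hk) (by omega))

lemma rectStage_iUnion (f : ℕ → ℚ × ℚ × ℚ × ℚ) :
    (⋃ n, rectStage f n) = ⋃ k, axisRect (qcast (f k)) := by
  apply Set.Subset.antisymm
  · refine Set.iUnion_subset fun n => ?_
    refine Set.iUnion₂_subset fun k _ => ?_
    exact Set.subset_iUnion (fun k => axisRect (qcast (f k))) k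
  · refine Set.iUnion_subset fun k => ?_
    intro y hy
    exact Set.mem_iUnion.2 ⟨k, Set.mem_biUnion (Finset.self_mem_range_succ k) hy⟩

lemma approx (M : Set Plane) (hM : MeasurableSet M) (hMfin : volume M ≠ ⊤) {ε : ℝ≥0∞}
    (hε : ε ≠ 0) :
    ∃ s : Finset (ℝ × ℝ × ℝ × ℝ), volume (symmDiff M (⋃ q ∈ s, axisRect q)) ≤ ε := by
  have hε2 : ε / 2 ≠ 0 := by
    simp [ENNReal.div_eq_zero_iff, hε]
  obtain ⟨U, hMU, hUopen, hUfin, hUM⟩ := hM.exists_isOpen_diff_lt hMfin hε2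
  set C : Set (ℚ × ℚ × ℚ × ℚ) := {q | axisRect (qcast q) ⊆ U} with hC
  have hUeq : U = ⋃ q ∈ C, axisRect (qcast q) := by
    apply Set.Subset.antisymm
    · intro y hy
      obtain ⟨ε', hε', hball⟩ := Metric.isOpen_iff.mp hUopen y hy
      obtain ⟨q, hyq, hsub⟩ := rect_mem_subset_ball y hε'
      exact Set.mem_biUnion (hsub.trans hball) hyq
    · simp only [Set.iUnion_subset_iff]
      intro q hq
      exact hq
  have key : ∃ s : Finset (ℝ × ℝ × ℝ × ℝ),
      (⋃ q ∈ s, axisRect q) ⊆ U ∧ volume (U \ ⋃ q ∈ s, axisRect q) ≤ ε / 2 := by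
    rcases C.eq_empty_or_nonempty with hCe | hCne
    · refine ⟨∅, by simp, ?_⟩
      rw [hUeq, hCe]
      simp
    · obtain ⟨f, hf⟩ := Set.Countable.exists_eq_range (Set.to_countable C) hCne
      have hAU : ∀ n, rectStage f n ⊆ U := by
        intro n
        refine Set.iUnion₂_subset fun k _ => ?_
        have : f k ∈ C := by rw [hf]; exact Set.mem_range_self k
        exact this
      have hAeq : (⋃ n, rectStage f n) = U := by
        rw [rectStage_iUnion, hUeq, hf]
        exact (Set.biUnion_range (f := f) (g := fun q => axisRect (qcast q))).symm
      have htend : Tendsto (fun n => volume (rectStage f n)) atTop (𝓝 (volume U)) := by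
        rw [← hAeq]
        exact tendsto_measure_iUnion_atTop (rectStage_mono f)
      have hkey : ∃ n, volume (U \ rectStage f n) ≤ ε / 2 := by
        by_cases hUsmall : volume U ≤ ε / 2
        · exact ⟨0, (measure_mono Set.diff_subset).trans hUsmall⟩
        · push_neg at hUsmall
          have hU0 : volume U ≠ 0 := by
            intro h
            rw [h] at hUsmall
            exact absurd hUsmall (not_lt.2 zero_le)
          have hlt : volume U - ε / 2 < volume U :=
            ENNReal.sub_lt_self hUfin.ne hU0 hε2
          obtain ⟨n, hn⟩ := (htend.eventually (eventually_gt_nhds hlt)).exists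
          refine ⟨n, ?_⟩
          rw [measure_diff (hAU n) (rectStage_measurableSet f n).nullMeasurableSet
            ((measure_mono (hAU n)).trans_lt hUfin).ne]
          have hhalf_ne : ε / 2 ≠ ⊤ := (hUsmall.trans hUfin).ne
          rw [ENNReal.sub_lt_iff_lt_right hhalf_ne hUsmall.le] at hn
          exact tsub_le_iff_left.2 hn.le
      obtain ⟨n, hn⟩ := hkey
      refine ⟨(Finset.range (n + 1)).image (fun k => qcast (f k)), ?_, ?_⟩
      · rw [← rectStage_eq]; exact hAU n
      · rw [← rectStage_eq]; exact hn
  obtain ⟨s, hsU, hs⟩ := key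
  refine ⟨s, ?_⟩
  have hsubs : symmDiff M (⋃ q ∈ s, axisRect q) ⊆ (U \ M) ∪ (U \ ⋃ q ∈ s, axisRect q) := by
    intro x hx
    rcases hx with ⟨hx1, hx2⟩ | ⟨hx1, hx2⟩
    · exact Or.inr ⟨hMU hx1, hx2⟩
    · exact Or.inl ⟨hsU hx1, hx2⟩
  calc volume (symmDiff M (⋃ q ∈ s, axisRect q))
      ≤ volume (U \ M) + volume (U \ ⋃ q ∈ s, axisRect q) :=
        (measure_mono hsubs).trans (measure_union_le _ _)
    _ ≤ ε / 2 + ε / 2 := add_le_add hUM.le hs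
    _ = ε := ENNReal.add_halves ε

/-- Let `T_n = S_{u_n} ∘ ⋯ ∘ S_{u_1}` be the Steiner process of a
sequence of unit vectors `{u_n}` in `ℝ²`.  If `λ(T_n R Δ R*) → 0` for every finite
union `R` of axis-parallel rectangles (where `R*` is the ball centered at the origin
with `λ(R*) = λ(R)`), then `λ(T_n M Δ M*) → 0` for every measurable set `M ⊆ ℝ²` of
finite measure. -/
theorem stmt_11 (u : ℕ → Plane) (hu : ∀ n, ‖u n‖ = 1)
    (hrect : ∀ (s : Finset (ℝ × ℝ × ℝ × ℝ)) (R : Set Plane),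
      R = ⋃ q ∈ s, axisRect q →
      ∀ r : ℝ, 0 ≤ r → volume (Metric.ball (0 : Plane) r) = volume R →
        Tendsto (fun n => volume (symmDiff (steinerProcess u n R)
          (Metric.ball (0 : Plane) r))) atTop (𝓝 0)) :
    ∀ M : Set Plane, MeasurableSet M → volume M < ⊤ →
      ∀ r : ℝ, 0 ≤ r → volume (Metric.ball (0 : Plane) r) = volume M →
        Tendsto (fun n => volume (symmDiff (steinerProcess u n M)
          (Metric.ball (0 : Plane) r))) atTop (𝓝 0) := by
  intro M hM hMfin r hr hvol
  rw [ENNReal.tendsto_atTop_zero]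
  intro ε hε
  set δ : ℝ≥0∞ := min ε 1 / 4 with hδ
  have hmin0 : min ε 1 ≠ 0 := (lt_min hε zero_lt_one).ne'
  have hδ0 : δ ≠ 0 := by
    rw [hδ]
    simp [ENNReal.div_eq_zero_iff, hmin0]
  have h3δ : δ + δ + δ ≤ ε := by
    have h4 : δ + δ + δ + δ = min ε 1 := by
      rw [hδ, show min ε 1 / 4 + min ε 1 / 4 + min ε 1 / 4 + min ε 1 / 4
          = 4 * (min ε 1 / 4) by ring]
      exact ENNReal.mul_div_cancel' (by norm_num) (by norm_num)
    calc δ + δ + δ ≤ δ + δ + δ + δ := le_self_add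
      _ = min ε 1 := h4
      _ ≤ ε := min_le_left _ _
  obtain ⟨s, hs⟩ := approx M hM hMfin.ne hδ0
  set R := ⋃ q ∈ s, axisRect q with hR
  have hRmeas : MeasurableSet R :=
    Finset.measurableSet_biUnion _ fun q _ => axisRect_measurableSet q
  have hδtop : δ ≠ ⊤ := by
    rw [hδ]
    exact (ENNReal.div_lt_top (by simp [ne_top_of_le_ne_top ENNReal.one_ne_top (min_le_right ε 1)])
      (by norm_num)).ne
  have hRM : volume R ≤ volume M + δ := by
    refine (measure_le_add_symmDiff volume R M).trans ?_
    rw [symmDiff_comm]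
    exact add_le_add_right hs _
  have hMR : volume M ≤ volume R + δ :=
    (measure_le_add_symmDiff volume M R).trans (add_le_add_right hs _)
  have hRfin : volume R < ⊤ :=
    hRM.trans_lt (ENNReal.add_lt_top.mpr ⟨hMfin, hδtop.lt_top⟩)
  obtain ⟨ρ, hρ0, hρvol⟩ := exists_radius (volume R) hRfin.ne
  have htendR := hrect s R hR ρ hρ0 hρvol
  obtain ⟨N, hN⟩ := ENNReal.tendsto_atTop_zero.mp htendR δ (pos_iff_ne_zero.mpr hδ0)
  refine ⟨N, fun n hn => ?_⟩
  have t1 : volume (symmDiff (steinerProcess u n M) (steinerProcess u n R)) ≤ δ :=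
    (process_contract u hu hM hRmeas n).trans hs
  have t2 : volume (symmDiff (steinerProcess u n R) (Metric.ball (0 : Plane) ρ)) ≤ δ := hN n hn
  have t3 : volume (symmDiff (Metric.ball (0 : Plane) ρ) (Metric.ball (0 : Plane) r)) ≤ δ := by
    apply ball_symmDiff_le
    · rw [hρvol, hvol]; exact hRM
    · rw [hρvol, hvol]; exact hMR
  calc volume (symmDiff (steinerProcess u n M) (Metric.ball (0 : Plane) r))
      ≤ volume (symmDiff (steinerProcess u n M) (steinerProcess u n R))
        + volume (symmDiff (steinerProcess u n R) (Metric.ball (0 : Plane) r)) :=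
        measure_symmDiff_le _ _ _
    _ ≤ δ + (volume (symmDiff (steinerProcess u n R) (Metric.ball (0 : Plane) ρ))
        + volume (symmDiff (Metric.ball (0 : Plane) ρ) (Metric.ball (0 : Plane) r))) :=
        add_le_add t1 (measure_symmDiff_le _ _ _)
    _ ≤ δ + (δ + δ) := add_le_add_right (add_le_add t2 t3) δ
    _ = δ + δ + δ := by ring
    _ ≤ ε := h3δ
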